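/- If φ_1, …, φ_n are unit vectors in ℂ^d with n > d, then the maximum over i ≠ j of |⟨φ_i, φ_j⟩| is at least √((n − d)/(d(n − 1))) (the Welch bound). -/

import Mathlib

open scoped Matrix

open Finset Matrix in
lemma trace_conjTranspose_mul_self_eq {m k : Type*} [Fintype m] [Fintype k]
    (A : Matrix m k ℂ) :
    (Aᴴ * A).trace = ((∑ i, ∑ j, ‖A i j‖ ^ 2 : ℝ) : ℂ) := by
  rw [Matrix.trace]
  push_cast
  rw [Finset.sum_comm]
  congr 1; ext j
  simp only [Matrix.diag_apply, Matrix.mul_apply, Matrix.conjTranspose_apply]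
  congr 1; ext i
  rw [mul_comm]
  simp only [RCLike.star_def]
  rw [Complex.mul_conj']

theorem welch_bound {d n : ℕ} (hn : d < n) (φ : Fin n → EuclideanSpace ℂ (Fin d))
    (hφ : ∀ i, ‖φ i‖ = 1) :
    ∃ i j, i ≠ j ∧
      Real.sqrt (((n : ℝ) - d) / (d * ((n : ℝ) - 1))) ≤ ‖(inner ℂ (φ i) (φ j) : ℂ)‖ := by
  classical
  -- d ≥ 1
  have hd : 0 < d := by
    rcases Nat.eq_zero_or_pos d with h | h
    · subst h
      have h1 := hφ ⟨0, hn⟩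
      have h0 : φ ⟨0, hn⟩ = 0 := Subsingleton.elim _ _
      rw [h0, norm_zero] at h1; norm_num at h1
    · exact h
  have hn2 : 2 ≤ n := by omega
  set M : Matrix (Fin d) (Fin n) ℂ := Matrix.of fun a i => φ i a with hM
  set G : Matrix (Fin n) (Fin n) ℂ := Mᴴ * M with hGdef
  set T : Matrix (Fin d) (Fin d) ℂ := M * Mᴴ with hTdef
  have hG : ∀ i j, G i j = (inner ℂ (φ i) (φ j) : ℂ) := by
    intro i j
    simp [hGdef, Matrix.mul_apply, Matrix.conjTranspose_apply, hM, PiLp.inner_apply,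
      RCLike.inner_apply, mul_comm]
  -- sum of squares of inner products
  set S : ℝ := ∑ i, ∑ j, ‖(inner ℂ (φ i) (φ j) : ℂ)‖ ^ 2 with hSdef
  -- G is Hermitian, trace identities
  have hGH : Gᴴ = G := by
    rw [hGdef, Matrix.conjTranspose_mul, Matrix.conjTranspose_conjTranspose]
  have hTH : Tᴴ = T := by
    rw [hTdef, Matrix.conjTranspose_mul, Matrix.conjTranspose_conjTranspose]
  have htrace : (Gᴴ * G).trace = (Tᴴ * T).trace := by
    rw [hGH, hTH, hGdef, hTdef]
    calc (Mᴴ * M * (Mᴴ * M)).trace = (Mᴴ * (M * (Mᴴ * M))).trace := by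
          rw [Matrix.mul_assoc]
      _ = ((M * (Mᴴ * M)) * Mᴴ).trace := Matrix.trace_mul_comm _ _
      _ = (M * Mᴴ * (M * Mᴴ)).trace := by
          rw [Matrix.mul_assoc, Matrix.mul_assoc, Matrix.mul_assoc]
  have hS : S = ∑ a, ∑ b, ‖T a b‖ ^ 2 := by
    have h1 := trace_conjTranspose_mul_self_eq G
    have h2 := trace_conjTranspose_mul_self_eq T
    rw [h1, h2] at htrace
    have := Complex.ofReal_injective htrace
    rw [hSdef, ← this]
    exact Finset.sum_congr rfl fun i _ => Finset.sum_congr rfl fun j _ => by rw [hG]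
  -- diagonal entries of T
  set r : Fin d → ℝ := fun a => ∑ i, ‖φ i a‖ ^ 2 with hr
  have hTdiag : ∀ a, T a a = ((r a : ℝ) : ℂ) := by
    intro a
    simp only [hTdef, Matrix.mul_apply, Matrix.conjTranspose_apply, hM, Matrix.of_apply, hr]
    push_cast
    refine Finset.sum_congr rfl fun i _ => ?_
    simp only [RCLike.star_def]
    rw [Complex.mul_conj']
  -- trace T = n
  have hrsum : ∑ a, r a = n := by
    have htr : T.trace = G.trace := Matrix.trace_mul_comm _ _
    have hGtr : G.trace = (n : ℂ) := by
      have h1 : ∀ i : Fin n, G i i = 1 := by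
        intro i
        rw [hG, inner_self_eq_norm_sq_to_K, hφ]
        norm_num
      rw [Matrix.trace]
      calc ∑ i, G.diag i = ∑ _i : Fin n, (1 : ℂ) :=
            Finset.sum_congr rfl fun i _ => h1 i
        _ = (n : ℂ) := by simp
    have : T.trace = (n : ℂ) := htr.trans hGtr
    rw [Matrix.trace] at this
    simp only [Matrix.diag_apply] at this
    have h2 : ((∑ a, r a : ℝ) : ℂ) = ((n : ℝ) : ℂ) := by
      push_cast
      rw [← this]
      congr 1; ext a; rw [hTdiag]
    exact_mod_cast h2
  -- Cauchy-Schwarz: n^2 ≤ d * S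
  have hCS : (n : ℝ) ^ 2 ≤ d * S := by
    have h1 : (∑ a, r a) ^ 2 ≤ (Finset.univ : Finset (Fin d)).card * ∑ a, r a ^ 2 :=
      sq_sum_le_card_mul_sum_sq
    rw [hrsum, Finset.card_univ, Fintype.card_fin] at h1
    have h2 : ∑ a, r a ^ 2 ≤ S := by
      rw [hS]
      apply Finset.sum_le_sum
      intro a _
      have : r a ^ 2 = ‖T a a‖ ^ 2 := by
        have hra : 0 ≤ r a := Finset.sum_nonneg fun i _ => sq_nonneg _
        rw [hTdiag, Complex.norm_real, Real.norm_eq_abs, abs_of_nonneg hra]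
      rw [this]
      exact Finset.single_le_sum (f := fun b => ‖T a b‖ ^ 2) (fun b _ => sq_nonneg _)
        (Finset.mem_univ a)
    calc (n : ℝ) ^ 2 ≤ d * ∑ a, r a ^ 2 := h1
      _ ≤ d * S := by
          apply mul_le_mul_of_nonneg_left h2 (by positivity)
  -- off-diagonal sum
  have hdiag : ∀ i : Fin n, ‖(inner ℂ (φ i) (φ i) : ℂ)‖ ^ 2 = 1 := by
    intro i
    rw [inner_self_eq_norm_sq_to_K, hφ]
    norm_num
  set t : ℝ := ((n : ℝ) - d) / (d * ((n : ℝ) - 1)) with ht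
  have hoffsum : ∑ p ∈ (Finset.univ : Finset (Fin n)).offDiag,
      ‖(inner ℂ (φ p.1) (φ p.2) : ℂ)‖ ^ 2 = S - n := by
    have hsplit : ∑ p ∈ (Finset.univ : Finset (Fin n)) ×ˢ Finset.univ,
        ‖(inner ℂ (φ p.1) (φ p.2) : ℂ)‖ ^ 2 = S := by
      rw [hSdef, Finset.sum_product]
    rw [← Finset.diag_union_offDiag (Finset.univ : Finset (Fin n)),
      Finset.sum_union (Finset.disjoint_diag_offDiag _)] at hsplit
    have hdiagsum : ∑ p ∈ (Finset.univ : Finset (Fin n)).diag,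
        ‖(inner ℂ (φ p.1) (φ p.2) : ℂ)‖ ^ 2 = n := by
      rw [Finset.sum_diag]
      calc ∑ i, ‖(inner ℂ (φ i) (φ i) : ℂ)‖ ^ 2 = ∑ _i : Fin n, (1 : ℝ) :=
            Finset.sum_congr rfl fun i _ => hdiag i
        _ = n := by simp
    linarith
  -- average argument
  have hcard : ((Finset.univ : Finset (Fin n)).offDiag.card : ℝ) = n * (n - 1) := by
    rw [Finset.offDiag_card, Finset.card_univ, Fintype.card_fin]
    have hnn : n ≤ n * n := Nat.le_mul_of_pos_left n (by omega)
    rw [Nat.cast_sub hnn, Nat.cast_mul]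
    ring
  have hne : ((Finset.univ : Finset (Fin n)).offDiag).Nonempty := by
    refine ⟨(⟨0, by omega⟩, ⟨1, by omega⟩), ?_⟩
    rw [Finset.mem_offDiag]
    refine ⟨Finset.mem_univ _, Finset.mem_univ _, ?_⟩
    intro h
    simpa using congrArg Fin.val h
  have hkey : ∑ p ∈ (Finset.univ : Finset (Fin n)).offDiag, t ≤
      ∑ p ∈ (Finset.univ : Finset (Fin n)).offDiag,
        ‖(inner ℂ (φ p.1) (φ p.2) : ℂ)‖ ^ 2 := by
    rw [Finset.sum_const, nsmul_eq_mul, hcard, hoffsum]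
    have hD : (1 : ℝ) ≤ d := by exact_mod_cast hd
    have hN : (d : ℝ) + 1 ≤ n := by exact_mod_cast hn
    have hN1 : (1 : ℝ) < n := by linarith
    rw [ht]
    have hd0 : (d : ℝ) ≠ 0 := by positivity
    have hn1 : (n : ℝ) - 1 ≠ 0 := by linarith
    -- n*(n-1) * ((n-d)/(d*(n-1))) ≤ S - n
    have heq : (n : ℝ) * ((n : ℝ) - 1) * (((n : ℝ) - d) / (d * ((n : ℝ) - 1)))
        = (n : ℝ) * ((n : ℝ) - d) / d := by
      field_simp
    rw [heq]
    rw [div_le_iff₀ (by positivity)]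
    nlinarith [hCS]
  obtain ⟨p, hp, hpt⟩ := Finset.exists_le_of_sum_le hne hkey
  rw [Finset.mem_offDiag] at hp
  refine ⟨p.1, p.2, hp.2.2, ?_⟩
  have : Real.sqrt t ≤ Real.sqrt (‖(inner ℂ (φ p.1) (φ p.2) : ℂ)‖ ^ 2) :=
    Real.sqrt_le_sqrt hpt
  rwa [Real.sqrt_sq (norm_nonneg _)] at this
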